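/- arXiv:2305.15209 — 2 statements merged into one kernel-verified Lean document; each statement's English description precedes it below -/
import Mathlib

section
/- Let X be a topological space and let F be a sheaf of types on X (an object of the category of sheaves of types for the Grothendieck topology of open covers on the opens of X). Then there exist a type I, a sheaf S of types on X, a monomorphism S ⟶ constantSheaf(I) into the constant sheaf at I, and an epimorphism S ⟶ F in the category of sheaves on X. In other words, every sheaf on a topological space is a subquotient of a constant sheaf; this expresses that the global sections geometric morphism Sh(X) → Set is localic. -/
open CategoryTheory TopologicalSpace

section Aux

universe u
variable {X : Type u} [TopologicalSpace X]
variable (F : Sheaf (Opens.grothendieckTopology X) (Type u))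

/-- index type -/
def sqIdx : Type u := Σ U : Opens X, F.val.obj (Opposite.op U)

/-- the presheaf P with P(V) = {(U,s) | V ≤ U} -/
def sqP : (Opens X)ᵒᵖ ⥤ Type u where
  obj V := { j : sqIdx F // V.unop ≤ j.1 }
  map f := TypeCat.ofHom fun j => ⟨j.1, le_trans (leOfHom f.unop) j.2⟩

def sqMono : sqP F ⟶ (Functor.const (Opens X)ᵒᵖ).obj (sqIdx F) where
  app V := TypeCat.ofHom Subtype.val

def sqEpi : sqP F ⟶ F.val where
  app V := TypeCat.ofHom fun j => F.val.map (homOfLE j.2).op j.1.2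
  naturality V W f := by
    ext j
    dsimp [sqP]
    exact FunctorToTypes.map_comp_apply F.val (homOfLE j.2).op f j.1.2

instance (V : (Opens X)ᵒᵖ) : Mono ((sqMono F).app V) := by
  rw [CategoryTheory.mono_iff_injective]
  exact Subtype.val_injective

instance (V : (Opens X)ᵒᵖ) : Epi ((sqEpi F).app V) := by
  rw [CategoryTheory.epi_iff_surjective]
  intro t
  refine ⟨⟨⟨V.unop, t⟩, le_refl _⟩, ?_⟩
  simp [sqEpi]

instance : Mono (sqMono F) := NatTrans.mono_of_mono_app _
instance : Epi (sqEpi F) := NatTrans.epi_of_epi_app _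

end Aux

/-- Every sheaf of types on a topological space is a subquotient of a constant sheaf:
there is a sheaf `S` with a monomorphism into a constant sheaf and an epimorphism
onto `F`. This expresses that the global sections geometric morphism
`Sh(X) → Set` is localic. -/
theorem sheaf_is_subquotient_of_constant {X : Type u} [TopologicalSpace X]
    (F : Sheaf (Opens.grothendieckTopology X) (Type u)) :
    ∃ (I : Type u) (S : Sheaf (Opens.grothendieckTopology X) (Type u))
      (m : S ⟶ (constantSheaf (Opens.grothendieckTopology X) (Type u)).obj I)
      (e : S ⟶ F), Mono m ∧ Epi e := by
  let J := Opens.grothendieckTopology X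
  let L := presheafToSheaf J (Type u)
  refine ⟨sqIdx F, L.obj (sqP F), L.map (sqMono F),
    L.map (sqEpi F) ≫ (sheafificationAdjunction J (Type u)).counit.app F, ?_, ?_⟩
  · exact L.map_mono _
  · have : Epi (L.map (sqEpi F)) := L.map_epi _
    exact epi_comp _ _
end

section
/- Let X be a topological space and let F be a sheaf of types on X (an object of the category of sheaves of types for the Grothendieck topology of open covers on the opens of X). Then there exist a type I, a family (S_i)_{i ∈ I} of sheaves on X each of which is subterminal (i.e. the unique morphism S_i ⟶ ⊤ to the terminal sheaf is a monomorphism), and an epimorphism ∐_{i ∈ I} S_i ⟶ F from their coproduct onto F. In other words, every sheaf on a topological space is covered by subterminal sheaves (corresponding to local sections of the associated étale map over open subsets). -/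
open CategoryTheory TopologicalSpace CategoryTheory.Limits Opposite

instance opens_hom_subsingleton {X : Type u} [TopologicalSpace X] (A B : Opens X) :
    Subsingleton (A ⟶ B) :=
  ⟨fun f g => by exact ULift.ext _ _ (Subsingleton.elim _ _)⟩

instance opens_yoneda_subsingleton {X : Type u} [TopologicalSpace X] (A : Opens X)
    (V : (Opens X)ᵒᵖ) : Subsingleton ((yoneda.obj A).obj V) :=
  opens_hom_subsingleton V.unop A

/-- The yoneda presheaf of an open set is a sheaf for the topology of open covers. -/
lemma opens_yoneda_isSheaf {X : Type u} [TopologicalSpace X] (U : Opens X) :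
    Presieve.IsSheaf (Opens.grothendieckTopology X) (yoneda.obj U) := by
  intro V S hS x hx
  refine ⟨homOfLE fun v hv => ?_, fun _ _ _ => Subsingleton.elim _ _,
    fun _ _ => Subsingleton.elim _ _⟩
  obtain ⟨W, f, hf, hvW⟩ := hS v hv
  exact leOfHom (x f hf) hvW

instance sheafHasColimitsOfShapeDiscrete {X : Type u} [TopologicalSpace X] (I : Type u) :
    HasColimitsOfShape (Discrete I) (Sheaf (Opens.grothendieckTopology X) (Type u)) :=
  Sheaf.instHasColimitsOfShape

/-- Every sheaf of types on a topological space is covered by subterminal sheaves: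
there is a family `(S i)` of sheaves, each admitting a monomorphism to the terminal
sheaf, together with an epimorphism from their coproduct onto `F`. -/
theorem sheaf_covered_by_subterminals {X : Type u} [TopologicalSpace X]
    (F : Sheaf (Opens.grothendieckTopology X) (Type u)) :
    ∃ (I : Type u) (S : I → Sheaf (Opens.grothendieckTopology X) (Type u)),
      (∀ i, Mono (terminal.from (S i))) ∧
      ∃ e : (∐ S) ⟶ F, Epi e := by
  classical
  set I : Type u := Σ U : Opens X, F.val.obj (op U) with hI
  set S : I → Sheaf (Opens.grothendieckTopology X) (Type u) :=
    fun i => ⟨yoneda.obj i.1,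
      (isSheaf_iff_isSheaf_of_type _ _).mpr (opens_yoneda_isSheaf i.1)⟩ with hS
  refine ⟨I, S, ?_, ?_⟩
  · intro i
    constructor
    intro T g h _
    apply Sheaf.hom_ext
    ext V t
    exact Subsingleton.elim _ _
  · set e : (∐ S) ⟶ F := Sigma.desc fun i => ObjectProperty.homMk (yonedaEquiv.symm i.2) with he
    refine ⟨e, ?_⟩
    have : Sheaf.IsLocallySurjective e := by
      constructor
      intro V s x hx
      refine ⟨V, 𝟙 V, ⟨(Sigma.ι S ⟨V, s⟩).hom.app (op V) (𝟙 V), ?_⟩, hx⟩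
      have h₁ : Sigma.ι S ⟨V, s⟩ ≫ e = ObjectProperty.homMk (yonedaEquiv.symm s) := Sigma.ι_desc _ _
      have h₃ := congr_app (congrArg (fun f => f.hom) h₁) (op V)
      have h₂ := types_congr_hom h₃ (𝟙 V)
      exact h₂
    infer_instance
end
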